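/- Let H = (V, E, w) be a weighted hypergraph with |V| ≥ 2 in which every hyperedge has at least 2 vertices, let ε ∈ (0,1], and let Ĥ = (V, Ê, ŵ) be a (1±ε/2)-approximate cut sparsifier of H. Then the total weight of Ĥ is at most three times the total weight of H, i.e., ŵ(Ê) ≤ 3·w(E). -/

import Mathlib

open Finset
open scoped Classical

/-- A hyperedge `e` crosses the cut `S` if it has at least one vertex in `S` and at least
one vertex outside `S`. -/
def hCrosses {V E : Type} (he : E → Finset V) (S : Finset V) (e : E) : Prop :=
  ((he e) ∩ S).Nonempty ∧ ((he e) \ S).Nonempty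

/-- The weight of the cut `S` in the weighted hypergraph `(V, E, w)`. -/
noncomputable def hCutWt {V E : Type} [Fintype E] (he : E → Finset V) (w : E → ℝ)
    (S : Finset V) : ℝ :=
  ∑ e : E, if hCrosses he S e then w e else 0

/-- Counting lemma: a set `A` of at least 2 vertices crosses at least half of all subsets. -/
lemma cross_count {V : Type} [Fintype V] (A : Finset V) (hA : 2 ≤ A.card) :
    2 ^ (Fintype.card V - 1) ≤
      (Finset.univ.filter (fun S : Finset V => (A ∩ S).Nonempty ∧ (A \ S).Nonempty)).card := by
  classical
  set n := Fintype.card V with hn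
  have hAn : A.card ≤ n := A.card_le_univ
  have hn1 : 2 ≤ n := le_trans hA hAn
  -- count subsets disjoint from A
  have h1 : (Finset.univ.filter (fun S : Finset V => A ∩ S = ∅)).card = 2 ^ (n - A.card) := by
    have heq : Finset.univ.filter (fun S : Finset V => A ∩ S = ∅)
        = (Finset.univ \ A).powerset := by
      ext S
      simp only [Finset.mem_filter, Finset.mem_univ, true_and, Finset.mem_powerset,
        Finset.subset_sdiff, Finset.subset_univ, true_and]
      constructor
      · intro h
        rw [Finset.disjoint_right]
        intro a haA haS
        exact Finset.notMem_empty a (h ▸ Finset.mem_inter.mpr ⟨haA, haS⟩)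
      · intro h
        rw [Finset.eq_empty_iff_forall_notMem]
        intro a ha
        rw [Finset.mem_inter] at ha
        exact (Finset.disjoint_left.mp h ha.2) ha.1
    rw [heq, Finset.card_powerset, Finset.card_sdiff_of_subset (Finset.subset_univ A),
      Finset.card_univ]
  -- count subsets containing A (bijection via complement)
  have h2 : (Finset.univ.filter (fun S : Finset V => A \ S = ∅)).card = 2 ^ (n - A.card) := by
    rw [← h1]
    apply Finset.card_bij' (fun S _ => Sᶜ) (fun S _ => Sᶜ)
    · intro S _; exact compl_compl S
    · intro S _; exact compl_compl S
    · intro S hS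
      simp only [Finset.mem_filter, Finset.mem_univ, true_and] at hS ⊢
      rw [Finset.sdiff_eq_empty_iff_subset] at hS
      rw [Finset.eq_empty_iff_forall_notMem]
      intro a ha
      rw [Finset.mem_inter, Finset.mem_compl] at ha
      exact ha.2 (hS ha.1)
    · intro S hS
      simp only [Finset.mem_filter, Finset.mem_univ, true_and] at hS ⊢
      rw [Finset.sdiff_eq_empty_iff_subset]
      intro a ha
      rw [Finset.eq_empty_iff_forall_notMem] at hS
      by_contra hcon
      simp only [Finset.mem_compl, not_not] at hcon
      exact hS a (Finset.mem_inter.mpr ⟨ha, hcon⟩)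
  -- non-crossing subsets
  have h3 : (Finset.univ.filter (fun S : Finset V => ¬ ((A ∩ S).Nonempty ∧ (A \ S).Nonempty))).card
      ≤ 2 ^ (n - 1) := by
    have hsub : Finset.univ.filter (fun S : Finset V => ¬ ((A ∩ S).Nonempty ∧ (A \ S).Nonempty))
        ⊆ (Finset.univ.filter (fun S : Finset V => A ∩ S = ∅))
          ∪ (Finset.univ.filter (fun S : Finset V => A \ S = ∅)) := by
      intro S hS
      simp only [Finset.mem_filter, Finset.mem_univ, true_and, Finset.mem_union] at hS ⊢
      rw [not_and_or, Finset.not_nonempty_iff_eq_empty, Finset.not_nonempty_iff_eq_empty] at hS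
      exact hS
    calc _ ≤ _ := Finset.card_le_card hsub
      _ ≤ _ + _ := Finset.card_union_le _ _
      _ ≤ 2 ^ (n - 1) := by
          rw [h1, h2, ← two_mul, ← pow_succ']
          apply Nat.pow_le_pow_right (by norm_num)
          omega
  have htot := Finset.card_filter_add_card_filter_not
    (s := (Finset.univ : Finset (Finset V)))
    (p := fun S : Finset V => (A ∩ S).Nonempty ∧ (A \ S).Nonempty)
  rw [Finset.card_univ, Fintype.card_finset, ← hn] at htot
  have h2n : 2 ^ n = 2 ^ (n - 1) + 2 ^ (n - 1) := by
    rw [← two_mul, ← pow_succ']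
    congr 1
    omega
  omega

/-- If `Ĥ` is a `(1 ± ε/2)`-approximate cut sparsifier (for `ε ∈ (0,1]`) of a
weighted hypergraph `H` on at least 2 vertices all of whose hyperedges have at least 2 vertices,
then the total weight of `Ĥ` is at most three times the total weight of `H`. -/
theorem stmt17 {V E : Type} [Fintype V] [Fintype E]
    (he : E → Finset V) (hhe : ∀ e, 2 ≤ (he e).card)
    (hV : 2 ≤ Fintype.card V)
    (w : E → ℝ) (hw : ∀ e, 0 ≤ w e)
    (ε : ℝ) (hε0 : 0 < ε) (hε1 : ε ≤ 1)
    (Ehat : Finset E) (what : E → ℝ) (hwhat : ∀ e, 0 ≤ what e)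
    (hsp : ∀ S : Finset V, S.Nonempty → S ≠ Finset.univ →
      |(∑ e ∈ Ehat, if hCrosses he S e then what e else 0) - hCutWt he w S|
        ≤ (ε / 2) * hCutWt he w S) :
    ∑ e ∈ Ehat, what e ≤ 3 * ∑ e : E, w e := by
  classical
  set n := Fintype.card V with hn
  set wE := ∑ e : E, w e with hwE
  have hwE0 : 0 ≤ wE := Finset.sum_nonneg fun e _ => hw e
  -- per-cut bound
  have keycut : ∀ S : Finset V,
      (∑ e ∈ Ehat, if hCrosses he S e then what e else 0) ≤ 3 / 2 * wE := by
    intro S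
    by_cases hS1 : S.Nonempty
    · by_cases hS2 : S = Finset.univ
      · have hz : ∀ e ∈ Ehat, (if hCrosses he S e then what e else 0) = 0 := by
          intro e _
          rw [if_neg]
          rintro ⟨_, h2⟩
          subst hS2
          obtain ⟨a, ha⟩ := h2
          simp at ha
        rw [Finset.sum_congr rfl hz, Finset.sum_const, smul_zero]
        positivity
      · have h := hsp S hS1 hS2
        have hcut0 : 0 ≤ hCutWt he w S := by
          apply Finset.sum_nonneg
          intro e _
          split_ifs
          · exact hw e
          · exact le_refl 0
        have hcutH : hCutWt he w S ≤ wE := by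
          apply Finset.sum_le_sum
          intro e _
          split_ifs
          · exact le_refl _
          · exact hw e
        have habs := (abs_le.mp h).2
        nlinarith
    · have hz : ∀ e ∈ Ehat, (if hCrosses he S e then what e else 0) = 0 := by
        intro e _
        rw [if_neg]
        rintro ⟨h1, _⟩
        rw [Finset.not_nonempty_iff_eq_empty] at hS1
        subst hS1
        obtain ⟨a, ha⟩ := h1
        simp at ha
      rw [Finset.sum_congr rfl hz, Finset.sum_const, smul_zero]
      positivity
  -- main averaging argument
  have main : (2 : ℝ) ^ (n - 1) * ∑ e ∈ Ehat, what e ≤ (2 : ℝ) ^ n * (3 / 2 * wE) := by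
    calc (2 : ℝ) ^ (n - 1) * ∑ e ∈ Ehat, what e
        = ∑ e ∈ Ehat, (2 : ℝ) ^ (n - 1) * what e := Finset.mul_sum _ _ _
      _ ≤ ∑ e ∈ Ehat,
            ((Finset.univ.filter (fun S : Finset V => hCrosses he S e)).card : ℝ) * what e := by
          apply Finset.sum_le_sum
          intro e _
          apply mul_le_mul_of_nonneg_right _ (hwhat e)
          have hfe : (Finset.univ.filter (fun S : Finset V => hCrosses he S e))
              = Finset.univ.filter
                  (fun S : Finset V => ((he e) ∩ S).Nonempty ∧ ((he e) \ S).Nonempty) := by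
            ext S
            simp only [Finset.mem_filter, Finset.mem_univ, true_and, hCrosses]
            exact ⟨fun h => ((@Finset.mem_filter _ _ (fun _ => Classical.propDecidable _) _ _).mp h).2, fun h => (@Finset.mem_filter _ _ (fun _ => Classical.propDecidable _) _ _).mpr ⟨Finset.mem_univ _, h⟩⟩
          rw [hfe]
          exact_mod_cast cross_count (he e) (hhe e)
      _ = ∑ e ∈ Ehat, ∑ S : Finset V, (if hCrosses he S e then what e else 0) := by
          apply Finset.sum_congr rfl
          intro e _
          rw [← Finset.sum_filter, Finset.sum_const, nsmul_eq_mul]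
      _ = ∑ S : Finset V, ∑ e ∈ Ehat, (if hCrosses he S e then what e else 0) :=
          Finset.sum_comm
      _ ≤ ∑ _S : Finset V, 3 / 2 * wE := Finset.sum_le_sum fun S _ => keycut S
      _ = (2 : ℝ) ^ n * (3 / 2 * wE) := by
          rw [Finset.sum_const, Finset.card_univ, Fintype.card_finset, nsmul_eq_mul]
          push_cast
          ring
  have hpow : (2 : ℝ) ^ n = 2 * (2 : ℝ) ^ (n - 1) := by
    rw [← pow_succ']
    congr 1
    omega
  have hpos : (0 : ℝ) < (2 : ℝ) ^ (n - 1) := by positivity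
  rw [hpow] at main
  have heq : (2 * (2 : ℝ) ^ (n - 1)) * (3 / 2 * wE) = (2 : ℝ) ^ (n - 1) * (3 * wE) := by ring
  rw [heq] at main
  exact (mul_le_mul_iff_right₀ hpos).mp main
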